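/- Fix δ with 0 < δ ≤ 1/2. Let (n_k) and (N_k) be sequences of positive integers with n_k → ∞, 2 n_k ≤ N_k ≤ n_k(n_k+3)/2, and N_k / n_k² → δ. Then (τ₃(n_k, N_k) − √2·N_k²) / N_k^{3/2} converges to −√(2δ)/8, where τ₃(n, N) = N·√( 2N(n·A₁ + 2(N−n−1)²·B₁) / (n²(n−1)² + 4n(N−n−1)(N−2n)) ), with A₁ = N n³ + (2N−1)n² − (N−1)(7N−2)n + (N−1)²(2N+3) and B₁ = √(n(n−1)N(N−n−1)). -/

import Mathlib

open Filter

/-- `A₁ = N n³ + (2N−1)n² − (N−1)(7N−2)n + (N−1)²(2N+3)`. -/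
noncomputable def A₁ (n N : ℝ) : ℝ :=
  N * n ^ 3 + (2 * N - 1) * n ^ 2 - (N - 1) * (7 * N - 2) * n + (N - 1) ^ 2 * (2 * N + 3)

/-- `B₁ = √(n(n−1)N(N−n−1))`. -/
noncomputable def B₁ (n N : ℝ) : ℝ :=
  Real.sqrt (n * (n - 1) * N * (N - n - 1))

/-- The degree-3 universal upper bound
`τ₃(n, N) = N·√( 2N(n·A₁ + 2(N−n−1)²·B₁) / (n²(n−1)² + 4n(N−n−1)(N−2n)) )`. -/
noncomputable def tau3 (n N : ℕ) : ℝ :=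
  (N : ℝ) * Real.sqrt
    (2 * N * ((n : ℝ) * A₁ n N + 2 * ((N : ℝ) - n - 1) ^ 2 * B₁ n N)
      / ((n : ℝ) ^ 2 * ((n : ℝ) - 1) ^ 2 + 4 * n * ((N : ℝ) - n - 1) * ((N : ℝ) - 2 * n)))

/-- Rescaled version of `n·A₁`: `Pp t x = t⁷ · (n A₁(n,N))` for `t = 1/n`, `x = N/n²`. -/
noncomputable def Pp (t x : ℝ) : ℝ :=
  2*x^3 + t*x - 7*t*x^2 + 2*t^2*x - t^2*x^2 + 9*t^3*x - t^4 - 4*t^4*x - 2*t^5 + 3*t^6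

/-- `Qtil = (2·Pp + 4x(x−t−t²)² − 2x·Denr)/t`. -/
noncomputable def Qtil (t x : ℝ) : ℝ :=
  2*x^2 - 4*t*x - 2*t*x^2 + 8*t^2*x - 2*t^3 - 4*t^3*x - 4*t^4 + 6*t^5

/-- Rescaled version of `B₁`. -/
noncomputable def SS (t x : ℝ) : ℝ := Real.sqrt ((1-t)*x*(x-t-t^2))

/-- Rescaled denominator. -/
noncomputable def Denr (t x : ℝ) : ℝ := 4*(x-t-t^2)*(x-2*t) + t*(1-t)^2

/-- The quantity under the square root, rescaled: `Gf t x = (sqrt-arg)/N²`. -/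
noncomputable def Gf (t x : ℝ) : ℝ :=
  2*(Pp t x + 2*(x-t-t^2)^2 * SS t x) / (x * Denr t x)

/-- Continuous extension of `(Gf t x − 2)/t` to `t = 0`. -/
noncomputable def Hf (t x : ℝ) : ℝ :=
  (Qtil t x - 4*(x-t-t^2)^2 * x * (1+x-t^2)/(SS t x + x)) / (x * Denr t x)

lemma Gsub (t x : ℝ) (ht : 0 < t) (ht2 : t ≤ 1/2) (hx : 0 < x)
    (hw : 0 ≤ x - t - t^2) (hxt : 0 ≤ x - 2*t) :
    Gf t x - 2 = t * Hf t x := by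
  have hDen : 0 < Denr t x := by
    have h1 : 0 ≤ 4*(x-t-t^2)*(x-2*t) := by positivity
    have h2 : 0 < t*(1-t)^2 := by nlinarith
    simp only [Denr]; linarith
  have hxDen : x * Denr t x ≠ 0 := by positivity
  have hs0 : 0 ≤ SS t x := Real.sqrt_nonneg _
  have hsx : 0 < SS t x + x := by linarith
  have hs2 : SS t x ^ 2 = (1-t)*x*(x-t-t^2) := by
    apply Real.sq_sqrt
    have h1 : (0:ℝ) ≤ 1 - t := by linarith
    exact mul_nonneg (mul_nonneg h1 hx.le) hw
  simp only [Gf, Hf, Pp, Qtil, Denr] at *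
  field_simp
  linear_combination (4*(x-t-t^2)^2) * hs2

set_option maxHeartbeats 1600000 in
lemma tau3_eq (n N : ℕ) (hn2 : 2 ≤ (n:ℝ)) (hNn : 2 * n ≤ N)
    (hG : 0 ≤ Gf (1/(n:ℝ)) ((N:ℝ)/(n:ℝ)^2)) :
    (tau3 n N - Real.sqrt 2 * (N:ℝ)^2) / (N:ℝ)^((3:ℝ)/2)
    = Real.sqrt ((N:ℝ)/(n:ℝ)^2)
        * ((Gf (1/(n:ℝ)) ((N:ℝ)/(n:ℝ)^2) - 2) * n)
        / (Real.sqrt (Gf (1/(n:ℝ)) ((N:ℝ)/(n:ℝ)^2)) + Real.sqrt 2) := by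
  have hnp : (0:ℝ) < n := by linarith
  have hNn' : (2:ℝ) * n ≤ N := by exact_mod_cast hNn
  have hNp : (0:ℝ) < N := by linarith
  set t : ℝ := 1/(n:ℝ) with htdef
  set x : ℝ := (N:ℝ)/(n:ℝ)^2 with hxdef
  have hxp : 0 < x := by positivity
  have hB : B₁ n N = (n:ℝ)^3 * SS t x := by
    have harg : (n:ℝ) * ((n:ℝ) - 1) * N * ((N:ℝ) - n - 1)
        = ((n:ℝ)^3)^2 * ((1-t)*x*(x-t-t^2)) := by
      rw [htdef, hxdef]; field_simp
    rw [B₁, harg, Real.sqrt_mul (sq_nonneg _), Real.sqrt_sq (by positivity), SS]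
  have hNn1r : (0:ℝ) < (N:ℝ) - n - 1 := by linarith
  have hD : (0:ℝ) < (n:ℝ)^2 * ((n:ℝ)-1)^2 + 4*n*((N:ℝ)-n-1)*((N:ℝ)-2*n) := by
    have h1 : (0:ℝ) < (n:ℝ)^2 * ((n:ℝ)-1)^2 := by nlinarith
    have h2 : (0:ℝ) ≤ 4*n*((N:ℝ)-n-1)*((N:ℝ)-2*n) := by
      have : (0:ℝ) ≤ (N:ℝ) - 2*n := by linarith
      positivity
    linarith
  have hDenr : 0 < Denr t x := by
    have hw : (0:ℝ) ≤ x - t - t^2 := by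
      have : x - t - t^2 = ((N:ℝ) - n - 1)/(n:ℝ)^2 := by
        rw [htdef, hxdef]; field_simp
      rw [this]; positivity
    have hxt : (0:ℝ) ≤ x - 2*t := by
      have : x - 2*t = ((N:ℝ) - 2*n)/(n:ℝ)^2 := by
        rw [htdef, hxdef]; field_simp
      rw [this]
      have : (0:ℝ) ≤ (N:ℝ) - 2*n := by linarith
      positivity
    have ht1 : t ≤ 1/2 := by
      rw [htdef, div_le_div_iff₀ hnp (by norm_num)]
      linarith
    have htp : 0 < t := by rw [htdef]; positivity
    have h1 : 0 ≤ 4*(x-t-t^2)*(x-2*t) := by positivity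
    have h2 : 0 < t*(1-t)^2 := by nlinarith
    rw [Denr]; linarith
  have harg2 : 2 * (N:ℝ) * ((n : ℝ) * A₁ n N + 2 * ((N : ℝ) - n - 1) ^ 2 * B₁ n N)
      / ((n : ℝ) ^ 2 * ((n : ℝ) - 1) ^ 2 + 4 * n * ((N : ℝ) - n - 1) * ((N : ℝ) - 2 * n))
      = (N:ℝ)^2 * Gf t x := by
    rw [hB, Gf, A₁, ← mul_div_assoc]
    rw [div_eq_div_iff hD.ne' (by positivity : x * Denr t x ≠ 0)]
    simp only [Pp, Denr, htdef, hxdef]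
    field_simp
    ring
  have htau : tau3 n N = (N:ℝ)^2 * Real.sqrt (Gf t x) := by
    rw [tau3, harg2, Real.sqrt_mul (sq_nonneg _), Real.sqrt_sq hNp.le]; ring
  have hrpow : (N:ℝ)^((3:ℝ)/2) = (N:ℝ) * Real.sqrt N := by
    rw [show (3:ℝ)/2 = 1 + 1/2 by norm_num, Real.rpow_add hNp, Real.rpow_one,
      ← Real.sqrt_eq_rpow]
  have hsqN : Real.sqrt (N:ℝ) = Real.sqrt x * n := by
    rw [show (N:ℝ) = x * (n:ℝ)^2 by rw [hxdef]; field_simp,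
      Real.sqrt_mul hxp.le, Real.sqrt_sq hnp.le]
  have hNsq : Real.sqrt (N:ℝ) * Real.sqrt (N:ℝ) = N := Real.mul_self_sqrt hNp.le
  have hsqNp : 0 < Real.sqrt (N:ℝ) := Real.sqrt_pos.mpr hNp
  have hg2 : Real.sqrt (Gf t x) ^ 2 = Gf t x := Real.sq_sqrt hG
  have h22 : Real.sqrt 2 ^ 2 = 2 := Real.sq_sqrt (by norm_num)
  have hgs : 0 < Real.sqrt (Gf t x) + Real.sqrt 2 := by
    have h1 : (0:ℝ) < Real.sqrt 2 := by positivity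
    have h2 := Real.sqrt_nonneg (Gf t x)
    linarith
  rw [htau, hrpow]
  have step1 : ((N:ℝ)^2 * Real.sqrt (Gf t x) - Real.sqrt 2 * (N:ℝ)^2) / ((N:ℝ) * Real.sqrt N)
      = Real.sqrt (N:ℝ) * (Real.sqrt (Gf t x) - Real.sqrt 2) := by
    rw [div_eq_iff (by positivity : (N:ℝ) * Real.sqrt (N:ℝ) ≠ 0)]
    linear_combination ((N:ℝ) * (Real.sqrt 2 - Real.sqrt (Gf t x))) * hNsq
  rw [step1, hsqN, eq_div_iff hgs.ne']
  linear_combination (Real.sqrt x * (n:ℝ)) * hg2 - (Real.sqrt x * (n:ℝ)) * h22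

/-- Asymptotics of the degree-3 bound in the regime `N_k ∼ δ n_k²`, `0 < δ ≤ 1/2`:
`(τ₃(n_k, N_k) − √2·N_k²)/N_k^{3/2} → −√(2δ)/8`. -/
theorem tau3_asymptotics (δ : ℝ) (hδ1 : 0 < δ) (hδ2 : δ ≤ 1 / 2)
    (n N : ℕ → ℕ) (hn : ∀ k, 0 < n k) (hN : ∀ k, 0 < N k)
    (hn_top : Tendsto (fun k => (n k : ℝ)) atTop atTop)
    (hNn1 : ∀ k, 2 * n k ≤ N k) (hNn2 : ∀ k, N k ≤ n k * (n k + 3) / 2)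
    (hratio : Tendsto (fun k => (N k : ℝ) / (n k : ℝ) ^ 2) atTop (nhds δ)) :
    Tendsto (fun k => (tau3 (n k) (N k) - Real.sqrt 2 * (N k : ℝ) ^ 2)
        / (N k : ℝ) ^ ((3 : ℝ) / 2))
      atTop (nhds (-(Real.sqrt (2 * δ)) / 8)) := by
  -- values of the limit functions at (0, δ)
  have hSS0 : SS 0 δ = δ := by
    rw [SS, show (1-(0:ℝ))*δ*(δ-0-0^2) = δ*δ by ring, Real.sqrt_mul_self hδ1.le]
  have hG0 : Gf 0 δ = 2 := by
    rw [Gf, hSS0]; simp only [Pp, Denr]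
    field_simp
    ring
  have hH0 : Hf 0 δ = -(1/2) := by
    rw [Hf, hSS0]; simp only [Qtil, Denr]
    have hd : δ * (4*(δ-0-0^2)*(δ-2*0) + 0*(1-0)^2) = 4*δ^3 := by ring
    rw [div_eq_iff (by rw [hd]; positivity)]
    field_simp
    ring
  -- continuity at (0, δ)
  have hS : Continuous (fun p : ℝ×ℝ => SS p.1 p.2) := by
    simp only [SS]
    exact Real.continuous_sqrt.comp (by fun_prop)
  have hden_ne : δ * Denr 0 δ ≠ 0 := by
    simp only [Denr]
    have : (0:ℝ) < 4*(δ-0-0^2)*(δ-2*0) + 0*(1-0)^2 := by nlinarith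
    positivity
  have hGcont : ContinuousAt (fun p : ℝ×ℝ => Gf p.1 p.2) (0, δ) := by
    apply ContinuousAt.div
    · simp only [Pp]; fun_prop
    · simp only [Denr]; fun_prop
    · exact hden_ne
  have hHcont : ContinuousAt (fun p : ℝ×ℝ => Hf p.1 p.2) (0, δ) := by
    apply ContinuousAt.div
    · apply ContinuousAt.sub
      · simp only [Qtil]; fun_prop
      · apply ContinuousAt.div
        · fun_prop
        · exact (hS.continuousAt.add (by fun_prop))
        · show SS 0 δ + δ ≠ 0
          rw [hSS0]; positivity
    · simp only [Denr]; fun_prop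
    · exact hden_ne
  -- limits along the sequences
  have htlim : Tendsto (fun k => 1/(n k:ℝ)) atTop (nhds 0) := by
    simpa [one_div, Function.comp_def] using tendsto_inv_atTop_zero.comp hn_top
  have hpair : Tendsto (fun k => ((1/(n k:ℝ), (N k:ℝ)/(n k:ℝ)^2) : ℝ × ℝ)) atTop
      (nhds (0, δ)) := htlim.prodMk_nhds hratio
  have hGlim : Tendsto (fun k => Gf (1/(n k:ℝ)) ((N k:ℝ)/(n k:ℝ)^2)) atTop (nhds 2) := by
    have := hGcont.tendsto.comp hpair
    simpa [hG0, Function.comp_def] using this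
  have hHlim : Tendsto (fun k => Hf (1/(n k:ℝ)) ((N k:ℝ)/(n k:ℝ)^2)) atTop
      (nhds (-(1/2))) := by
    have := hHcont.tendsto.comp hpair
    simpa [hH0, Function.comp_def] using this
  have hev : ∀ᶠ k in atTop, (2:ℝ) ≤ (n k:ℝ) := hn_top.eventually_ge_atTop 2
  have hGev : ∀ᶠ k in atTop, (1:ℝ) ≤ Gf (1/(n k:ℝ)) ((N k:ℝ)/(n k:ℝ)^2) :=
    hGlim.eventually (eventually_ge_nhds (by norm_num))
  -- eventual identity ((G - 2) * n = H)
  have heq1 : (fun k => (Gf (1/(n k:ℝ)) ((N k:ℝ)/(n k:ℝ)^2) - 2) * (n k:ℝ))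
      =ᶠ[atTop] fun k => Hf (1/(n k:ℝ)) ((N k:ℝ)/(n k:ℝ)^2) := by
    filter_upwards [hev] with k hk
    have hnp : (0:ℝ) < n k := by linarith
    have hNn' : (2:ℝ) * n k ≤ N k := by exact_mod_cast hNn1 k
    set t : ℝ := 1/(n k:ℝ) with htdef
    set x : ℝ := (N k:ℝ)/(n k:ℝ)^2 with hxdef
    have htp : 0 < t := by rw [htdef]; positivity
    have ht1 : t ≤ 1/2 := by
      rw [htdef, div_le_div_iff₀ hnp (by norm_num)]; linarith
    have hxp : 0 < x := by
      have : (0:ℝ) < N k := by linarith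
      rw [hxdef]; positivity
    have hw : (0:ℝ) ≤ x - t - t^2 := by
      have h : x - t - t^2 = ((N k:ℝ) - n k - 1)/(n k:ℝ)^2 := by
        rw [htdef, hxdef]; field_simp
      rw [h]
      have : (0:ℝ) ≤ (N k:ℝ) - n k - 1 := by linarith
      positivity
    have hxt : (0:ℝ) ≤ x - 2*t := by
      have h : x - 2*t = ((N k:ℝ) - 2*n k)/(n k:ℝ)^2 := by
        rw [htdef, hxdef]; field_simp
      rw [h]
      have : (0:ℝ) ≤ (N k:ℝ) - 2*n k := by linarith
      positivity
    have := Gsub t x htp ht1 hxp hw hxt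
    rw [this, htdef]
    field_simp
  have hHlim' : Tendsto (fun k => (Gf (1/(n k:ℝ)) ((N k:ℝ)/(n k:ℝ)^2) - 2) * (n k:ℝ))
      atTop (nhds (-(1/2))) := hHlim.congr' heq1.symm
  have hxs : Tendsto (fun k => Real.sqrt ((N k:ℝ)/(n k:ℝ)^2)) atTop
      (nhds (Real.sqrt δ)) := hratio.sqrt
  have hGs : Tendsto (fun k => Real.sqrt (Gf (1/(n k:ℝ)) ((N k:ℝ)/(n k:ℝ)^2)) + Real.sqrt 2)
      atTop (nhds (Real.sqrt 2 + Real.sqrt 2)) := by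
    exact (hGlim.sqrt).add tendsto_const_nhds
  have hfinal : Tendsto (fun k =>
      Real.sqrt ((N k:ℝ)/(n k:ℝ)^2)
        * ((Gf (1/(n k:ℝ)) ((N k:ℝ)/(n k:ℝ)^2) - 2) * (n k:ℝ))
        / (Real.sqrt (Gf (1/(n k:ℝ)) ((N k:ℝ)/(n k:ℝ)^2)) + Real.sqrt 2)) atTop
      (nhds (Real.sqrt δ * -(1/2) / (Real.sqrt 2 + Real.sqrt 2))) := by
    exact (hxs.mul hHlim').div hGs (by positivity)
  have hval : Real.sqrt δ * -(1/2) / (Real.sqrt 2 + Real.sqrt 2)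
      = -(Real.sqrt (2*δ))/8 := by
    rw [Real.sqrt_mul (by norm_num : (0:ℝ) ≤ 2)]
    have h22 : Real.sqrt 2 ^ 2 = 2 := Real.sq_sqrt (by norm_num)
    have h2p : (0:ℝ) < Real.sqrt 2 := by positivity
    rw [div_eq_div_iff (by positivity) (by norm_num : (8:ℝ) ≠ 0)]
    linear_combination (2 * Real.sqrt δ) * h22
  rw [← hval]
  apply hfinal.congr'
  filter_upwards [hev, hGev] with k h2 hG1
  exact (tau3_eq (n k) (N k) h2 (hNn1 k) (by linarith)).symm
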